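/- Let K ≥ 1, a^k > 0, 0 ≤ n^k ≤ N^k for all k, and let f̄^1,…,f̄^K : ℝ → ℝ be continuous functions such that for each k the map φ ↦ f̄^k(φ)·φ is nondecreasing on [n^k, N^k]. Define, for C ∈ [Σ_k a^k n^k, Σ_k a^k N^k], G(C) := max { Σ_k f̄^k(φ^k)·φ^k : n^k ≤ φ^k ≤ N^k for all k, Σ_k a^k φ^k = C }. Then G is nondecreasing on the interval [Σ_k a^k n^k, Σ_k a^k N^k]. -/
import Mathlib


/-- The farmer's maximal production profit given water budget `C`:
the supremum (attained, for `C` in the feasible interval) of the profit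
`∑ k, f k (φ k) * φ k` over production plans `φ` with `n ≤ φ ≤ N` and
water consumption `∑ k, a k * φ k = C`. -/
noncomputable def maxProfit (K : ℕ) (a n N : Fin K → ℝ) (f : Fin K → ℝ → ℝ) (C : ℝ) : ℝ :=
  sSup {y | ∃ φ : Fin K → ℝ, (∀ k, n k ≤ φ k ∧ φ k ≤ N k) ∧
    (∑ k, a k * φ k = C) ∧ y = ∑ k, f k (φ k) * φ k}

/-- Interpolation lemma: any budget between the cost of `lo` and the cost of `hi`
is attained by some plan between `lo` and `hi`. -/
lemma interp_exists (K : ℕ) (a lo hi : Fin K → ℝ) (hlh : ∀ k, lo k ≤ hi k)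
    (C : ℝ) (h1 : ∑ k, a k * lo k ≤ C) (h2 : C ≤ ∑ k, a k * hi k) :
    ∃ φ : Fin K → ℝ, (∀ k, lo k ≤ φ k ∧ φ k ≤ hi k) ∧ ∑ k, a k * φ k = C := by
  set A := ∑ k, a k * lo k with hA
  set B := ∑ k, a k * hi k with hB
  rcases eq_or_lt_of_le (le_trans h1 h2) with hAB | hAB
  · refine ⟨lo, fun k => ⟨le_refl _, hlh k⟩, le_antisymm h1 ?_⟩
    calc C ≤ B := h2
      _ = A := hAB.symm
  · set t := (C - A) / (B - A) with ht
    have hBA : 0 < B - A := sub_pos.mpr hAB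
    have ht0 : 0 ≤ t := div_nonneg (sub_nonneg.mpr h1) hBA.le
    have ht1 : t ≤ 1 := by
      rw [ht, div_le_one hBA]; linarith
    refine ⟨fun k => lo k + t * (hi k - lo k), fun k => ?_, ?_⟩
    · dsimp only
      constructor
      · nlinarith [sub_nonneg.mpr (hlh k), mul_nonneg ht0 (sub_nonneg.mpr (hlh k))]
      · nlinarith [mul_le_of_le_one_left (sub_nonneg.mpr (hlh k)) ht1]
    · have : ∑ k, a k * (lo k + t * (hi k - lo k))
          = A + t * (B - A) := by
        rw [hA, hB, ← Finset.sum_sub_distrib, Finset.mul_sum, ← Finset.sum_add_distrib]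
        congr 1; ext k; ring
      rw [this, ht, div_mul_cancel₀]
      · ring
      · exact hBA.ne'

theorem stmt1 (K : ℕ) (hK : 1 ≤ K) (a n N : Fin K → ℝ)
    (ha : ∀ k, 0 < a k) (hn : ∀ k, 0 ≤ n k) (hnN : ∀ k, n k ≤ N k)
    (f : Fin K → ℝ → ℝ) (hf : ∀ k, Continuous (f k))
    (hmono : ∀ k, MonotoneOn (fun x => f k x * x) (Set.Icc (n k) (N k))) :
    MonotoneOn (maxProfit K a n N f) (Set.Icc (∑ k, a k * n k) (∑ k, a k * N k)) := by
  intro C1 hC1 C2 hC2 hle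
  -- the feasible-profit set and its upper bound
  have hbdd : ∀ C, BddAbove {y | ∃ φ : Fin K → ℝ, (∀ k, n k ≤ φ k ∧ φ k ≤ N k) ∧
      (∑ k, a k * φ k = C) ∧ y = ∑ k, f k (φ k) * φ k} := by
    intro C
    refine ⟨∑ k, f k (N k) * N k, ?_⟩
    rintro y ⟨φ, hφ, -, rfl⟩
    apply Finset.sum_le_sum
    intro k _
    exact hmono k ⟨(hφ k).1, (hφ k).2⟩ ⟨hnN k, le_refl _⟩ (hφ k).2
  -- nonemptiness of the set at C1
  obtain ⟨φ, hφ, hφsum⟩ := interp_exists K a n N hnN C1 hC1.1 hC1.2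
  have hne : ({y | ∃ φ : Fin K → ℝ, (∀ k, n k ≤ φ k ∧ φ k ≤ N k) ∧
      (∑ k, a k * φ k = C1) ∧ y = ∑ k, f k (φ k) * φ k}).Nonempty :=
    ⟨_, φ, hφ, hφsum, rfl⟩
  unfold maxProfit
  apply csSup_le hne
  rintro y ⟨ψ, hψ, hψsum, rfl⟩
  -- interpolate ψ up to a plan at budget C2
  obtain ⟨χ, hχ, hχsum⟩ := interp_exists K a ψ N (fun k => (hψ k).2) C2
    (hψsum ▸ hle) hC2.2
  have hχmem : ∀ k, n k ≤ χ k ∧ χ k ≤ N k :=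
    fun k => ⟨le_trans (hψ k).1 (hχ k).1, (hχ k).2⟩
  calc ∑ k, f k (ψ k) * ψ k ≤ ∑ k, f k (χ k) * χ k := by
        apply Finset.sum_le_sum
        intro k _
        exact hmono k ⟨(hψ k).1, (hψ k).2⟩ ⟨(hχmem k).1, (hχmem k).2⟩ (hχ k).1
    _ ≤ _ := le_csSup (hbdd C2) ⟨χ, hχmem, hχsum, rfl⟩
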